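/- Let a11 < 0, a22 < 0, a33 < 0, a12 < 0, a13 < 0, a24 > 0, a34 > 0 be real numbers satisfying a11² > a33² > -a13·a34 and a11² > a22² > -a12·a24. Then Ã1 := -a22²·a11³ - a33²·a11³ - 2·a22·a33·a11³ - a22³·a11² - a33³·a11² - 4·a22·a33²·a11² + a12·a22·a24·a11² - 4·a22²·a33·a11² + a13·a33·a34·a11² - 2·a22·a33³·a11 - 4·a22²·a33²·a11 - a12·a24·a33²·a11 + a12·a22²·a24·a11 - 2·a22³·a33·a11 - a12·a22·a24·a33·a11 - a13·a22²·a34·a11 + a13·a33²·a34·a11 - a13·a22·a33·a34·a11 - a22²·a33³ - a12·a24·a33³ - a22³·a33² - a12·a22·a24·a33² - a13·a22³·a34 - a13·a22²·a33·a34 > 0. -/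
import Mathlib

theorem stmt_3 (a11 a22 a33 a12 a13 a24 a34 : ℝ)
    (h11 : a11 < 0) (h22 : a22 < 0) (h33 : a33 < 0)
    (h12 : a12 < 0) (h13 : a13 < 0) (h24 : a24 > 0) (h34 : a34 > 0)
    (h1 : a11^2 > a33^2) (h2 : a33^2 > -a13*a34)
    (h3 : a11^2 > a22^2) (h4 : a22^2 > -a12*a24) :
    -a22^2*a11^3 - a33^2*a11^3 - 2*a22*a33*a11^3 - a22^3*a11^2 - a33^3*a11^2
      - 4*a22*a33^2*a11^2 + a12*a22*a24*a11^2 - 4*a22^2*a33*a11^2 + a13*a33*a34*a11^2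
      - 2*a22*a33^3*a11 - 4*a22^2*a33^2*a11 - a12*a24*a33^2*a11 + a12*a22^2*a24*a11
      - 2*a22^3*a33*a11 - a12*a22*a24*a33*a11 - a13*a22^2*a34*a11 + a13*a33^2*a34*a11
      - a13*a22*a33*a34*a11 - a22^2*a33^3 - a12*a24*a33^3 - a22^3*a33^2
      - a12*a22*a24*a33^2 - a13*a22^3*a34 - a13*a22^2*a33*a34 > 0 := by
  have A : a22^2 + a12*a24 > 0 := by linarith
  have B : a33^2 + a13*a34 > 0 := by linarith
  have C : a11^2 - a33^2 > 0 := by linarith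
  have D : a11^2 - a22^2 > 0 := by linarith
  have P1 : -a33^3 - a11*a33^2 - a11*a22*a33 > 0 := by
    nlinarith [mul_pos (mul_pos_of_neg_of_neg h11 h22) (neg_pos.mpr h33),
      mul_pos (mul_pos_of_neg_of_neg h33 h33) (neg_pos.mpr h33),
      mul_pos (mul_pos_of_neg_of_neg h33 h33) (neg_pos.mpr h11)]
  have P2 : -a22^3 - a11*a22^2 - a11*a22*a33 > 0 := by
    nlinarith [mul_pos (mul_pos_of_neg_of_neg h11 h22) (neg_pos.mpr h33),
      mul_pos (mul_pos_of_neg_of_neg h22 h22) (neg_pos.mpr h22),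
      mul_pos (mul_pos_of_neg_of_neg h22 h22) (neg_pos.mpr h11)]
  have E : a22*a12*a24 > 0 := mul_pos (mul_pos_of_neg_of_neg h22 h12) h24
  have F : a33*a13*a34 > 0 := mul_pos (mul_pos_of_neg_of_neg h33 h13) h34
  have hR : -a11^3*a22^2 - a11^2*a22^3 + a11*a22^2*a12*a24 - 2*a11^3*a22*a33
      - 4*a11^2*a22^2*a33 - a11*a22^3*a33 - a11^3*a33^2 - 4*a11^2*a22*a33^2
      - 2*a11*a22^2*a33^2 - a11^2*a33^3 - a11*a22*a33^3 + a11*a33^2*a13*a34 > 0 := by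
    nlinarith [mul_pos (mul_pos (mul_pos (neg_pos.mpr h11) (neg_pos.mpr h11)) (neg_pos.mpr h11)) (mul_pos_of_neg_of_neg h22 h22),
      mul_pos (mul_pos (mul_pos (neg_pos.mpr h11) (neg_pos.mpr h11)) (neg_pos.mpr h11)) (mul_pos_of_neg_of_neg h33 h33),
      mul_pos (mul_pos (mul_pos_of_neg_of_neg h11 h22) (mul_pos_of_neg_of_neg h11 h22)) (neg_pos.mpr h22),
      mul_pos (mul_pos (mul_pos_of_neg_of_neg h11 h33) (mul_pos_of_neg_of_neg h11 h33)) (neg_pos.mpr h33),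
      mul_pos (mul_pos (mul_pos_of_neg_of_neg h11 h12) (mul_pos_of_neg_of_neg h22 h22)) h24,
      mul_pos (mul_pos (mul_pos_of_neg_of_neg h11 h13) (mul_pos_of_neg_of_neg h33 h33)) h34,
      mul_pos (mul_pos (mul_pos_of_neg_of_neg h11 h22) (mul_pos_of_neg_of_neg h11 h33)) (mul_pos_of_neg_of_neg h11 h11),
      mul_pos (mul_pos (mul_pos_of_neg_of_neg h11 h22) (mul_pos_of_neg_of_neg h11 h22)) (mul_pos_of_neg_of_neg h11 h33),
      mul_pos (mul_pos (mul_pos_of_neg_of_neg h11 h33) (mul_pos_of_neg_of_neg h11 h33)) (mul_pos_of_neg_of_neg h11 h22),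
      mul_pos (mul_pos (mul_pos_of_neg_of_neg h11 h22) (mul_pos_of_neg_of_neg h22 h33)) (neg_pos.mpr h22),
      mul_pos (mul_pos (mul_pos_of_neg_of_neg h11 h33) (mul_pos_of_neg_of_neg h22 h33)) (neg_pos.mpr h33),
      mul_pos (mul_pos (mul_pos_of_neg_of_neg h11 h22) (mul_pos_of_neg_of_neg h33 h33)) (neg_pos.mpr h22),
      mul_pos (mul_pos (mul_pos_of_neg_of_neg h11 h33) (mul_pos_of_neg_of_neg h22 h22)) (neg_pos.mpr h33)]
  have key : -a22^2*a11^3 - a33^2*a11^3 - 2*a22*a33*a11^3 - a22^3*a11^2 - a33^3*a11^2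
      - 4*a22*a33^2*a11^2 + a12*a22*a24*a11^2 - 4*a22^2*a33*a11^2 + a13*a33*a34*a11^2
      - 2*a22*a33^3*a11 - 4*a22^2*a33^2*a11 - a12*a24*a33^2*a11 + a12*a22^2*a24*a11
      - 2*a22^3*a33*a11 - a12*a22*a24*a33*a11 - a13*a22^2*a34*a11 + a13*a33^2*a34*a11
      - a13*a22*a33*a34*a11 - a22^2*a33^3 - a12*a24*a33^3 - a22^3*a33^2
      - a12*a22*a24*a33^2 - a13*a22^3*a34 - a13*a22^2*a33*a34
      = (a22^2 + a12*a24)*(-a33^3 - a11*a33^2 - a11*a22*a33)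
      + (a33^2 + a13*a34)*(-a22^3 - a11*a22^2 - a11*a22*a33)
      + (a11^2 - a33^2)*(a22*a12*a24) + (a11^2 - a22^2)*(a33*a13*a34)
      + (-a11^3*a22^2 - a11^2*a22^3 + a11*a22^2*a12*a24 - 2*a11^3*a22*a33
      - 4*a11^2*a22^2*a33 - a11*a22^3*a33 - a11^3*a33^2 - 4*a11^2*a22*a33^2
      - 2*a11*a22^2*a33^2 - a11^2*a33^3 - a11*a22*a33^3 + a11*a33^2*a13*a34) := by
    ring
  rw [key]
  have := add_pos (add_pos (add_pos (add_pos (mul_pos A P1) (mul_pos B P2)) (mul_pos C E)) (mul_pos D F)) hR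
  linarith
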